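/- Let (X,μ) be a finite measure space and φ, ψ bounded measurable functions with a := max(‖φ‖_∞, ‖ψ‖_∞). If 0 < ‖φ−ψ‖_{L^1(X)} ≤ 1/2, then ‖φ−ψ‖_{Exp L(X)} ≤ C_a / log(1/‖φ−ψ‖_{L^1(X)}), where C_a > 0 is a constant depending only on a and μ(X), and ‖u‖_{Exp L(X)} := inf{k>0 : ∫_X (e^{|u|/k}−1) dμ ≤ 1}. -/

import Mathlib

open MeasureTheory

/-- Control of the `Exp L` Luxemburg norm of a difference of bounded functions by
the logarithm of the reciprocal of its `L^1` norm: there is a constant `C_a > 0`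
(depending only on `a` and the measure) such that whenever `|φ| ≤ a`, `|ψ| ≤ a` and
`0 < ‖φ - ψ‖_{L^1} ≤ 1/2`, one has
`‖φ - ψ‖_{Exp L} ≤ C_a / log (1/‖φ - ψ‖_{L^1})`. -/
theorem expL_norm_le_of_L1_small {X : Type*} [MeasurableSpace X]
    (μ : Measure X) [IsFiniteMeasure μ] (a : ℝ) (ha : 0 < a) :
    ∃ C > (0:ℝ), ∀ φ ψ : X → ℝ, Measurable φ → Measurable ψ →
      (∀ x, |φ x| ≤ a) → (∀ x, |ψ x| ≤ a) →
      0 < ∫ x, |φ x - ψ x| ∂μ → (∫ x, |φ x - ψ x| ∂μ) ≤ 1 / 2 →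
      sInf {k : ℝ | 0 < k ∧ ∫ x, (Real.exp (|φ x - ψ x| / k) - 1) ∂μ ≤ 1}
        ≤ C / Real.log (1 / ∫ x, |φ x - ψ x| ∂μ) := by
  refine ⟨4*a+4, by linarith, ?_⟩
  intro φ ψ hφm hψm hφa hψa hL0 hL2
  set L := ∫ x, |φ x - ψ x| ∂μ with hLdef
  set T := Real.log (1/L) with hTdef
  have hT0 : 0 < T := Real.log_pos (by rw [lt_div_iff₀ hL0]; linarith)
  set C := 4*a+4 with hCdef
  have hC4 : (4:ℝ) ≤ C := by simp only [hCdef]; linarith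
  have hC0 : 0 < C := by linarith
  set k := C / T with hkdef
  have hk0 : 0 < k := div_pos hC0 hT0
  have hu2a : ∀ x, |φ x - ψ x| ≤ 2*a := by
    intro x
    have h1 := abs_le.mp (hφa x)
    have h2 := abs_le.mp (hψa x)
    exact abs_le.mpr ⟨by linarith, by linarith⟩
  have humeas : Measurable (fun x => |φ x - ψ x|) := (hφm.sub hψm).abs
  have huint : Integrable (fun x => |φ x - ψ x|) μ := by
    apply (integrable_const (2*a)).mono' humeas.aestronglyMeasurable
    filter_upwards with x
    rw [Real.norm_eq_abs, abs_abs]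
    exact hu2a x
  have hfmeas : Measurable (fun x => Real.exp (|φ x - ψ x| / k) - 1) :=
    (humeas.div_const k).exp.sub measurable_const
  have hfint : Integrable (fun x => Real.exp (|φ x - ψ x| / k) - 1) μ := by
    apply (integrable_const (Real.exp (2*a/k))).mono' hfmeas.aestronglyMeasurable
    filter_upwards with x
    have h1 : (1:ℝ) ≤ Real.exp (|φ x - ψ x| / k) :=
      Real.one_le_exp (by positivity)
    have h2 : Real.exp (|φ x - ψ x| / k) ≤ Real.exp (2*a/k) :=
      Real.exp_le_exp.mpr (by gcongr; exact hu2a x)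
    rw [Real.norm_eq_abs, abs_of_nonneg (by linarith)]
    linarith
  have key : ∀ t : ℝ, 0 ≤ t → Real.exp t - 1 ≤ t * Real.exp t := by
    intro t ht
    have hE : 0 < Real.exp t := Real.exp_pos t
    have h : 1 - t ≤ (Real.exp t)⁻¹ := by
      have := Real.add_one_le_exp (-t)
      rw [Real.exp_neg] at this
      linarith
    have h2 : (1 - t) * Real.exp t ≤ 1 := by
      calc (1-t) * Real.exp t ≤ (Real.exp t)⁻¹ * Real.exp t := by nlinarith
      _ = 1 := inv_mul_cancel₀ hE.ne'
    nlinarith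
  have hpt : ∀ x, Real.exp (|φ x - ψ x| / k) - 1 ≤
      (Real.exp (2*a/k) / k) * |φ x - ψ x| := by
    intro x
    have h0 : 0 ≤ |φ x - ψ x| / k := by positivity
    have h1 := key _ h0
    have h2 : Real.exp (|φ x - ψ x| / k) ≤ Real.exp (2*a/k) :=
      Real.exp_le_exp.mpr (by gcongr; exact hu2a x)
    calc Real.exp (|φ x - ψ x| / k) - 1
        ≤ (|φ x - ψ x| / k) * Real.exp (|φ x - ψ x| / k) := h1
      _ ≤ (|φ x - ψ x| / k) * Real.exp (2*a/k) := by
          apply mul_le_mul_of_nonneg_left h2 h0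
      _ = (Real.exp (2*a/k) / k) * |φ x - ψ x| := by ring
  have hint : ∫ x, (Real.exp (|φ x - ψ x| / k) - 1) ∂μ ≤ (Real.exp (2*a/k) / k) * L := by
    have h := integral_mono hfint (huint.const_mul _) hpt
    rwa [integral_const_mul] at h
  have hLT : L = Real.exp (-T) := by
    rw [hTdef, one_div, Real.log_inv, neg_neg, Real.exp_log hL0]
  have hak : 2*a/k = 2*a*T/C := by
    rw [hkdef]
    field_simp
  have h2 : 2*a*T/C - T ≤ -(T/2) := by
    have h : 2*a*T/C ≤ T/2 := by
      rw [div_le_iff₀ hC0]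
      nlinarith
    linarith
  have h3 : T ≤ 2 * Real.exp (T/2) := by
    have := Real.add_one_le_exp (T/2)
    linarith
  have h4 : Real.exp (-(T/2)) * (T/C) ≤ 1 := by
    have hE : 0 < Real.exp (T/2) := Real.exp_pos _
    rw [Real.exp_neg, inv_mul_eq_div, div_le_one hE, div_le_iff₀ hC0]
    nlinarith
  have hgoal : Real.exp (2*a/k) / k * L = Real.exp (2*a*T/C - T) * (T/C) := by
    rw [hak, hLT, hkdef, Real.exp_sub, Real.exp_neg]
    have hE : Real.exp T ≠ 0 := (Real.exp_pos T).ne'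
    field_simp
  have hnum : Real.exp (2*a/k) / k * L ≤ 1 := by
    rw [hgoal]
    have hE1 : Real.exp (2*a*T/C - T) ≤ Real.exp (-(T/2)) := Real.exp_le_exp.mpr h2
    have hTC : 0 ≤ T/C := by positivity
    calc Real.exp (2*a*T/C - T) * (T/C) ≤ Real.exp (-(T/2)) * (T/C) :=
          mul_le_mul_of_nonneg_right hE1 hTC
      _ ≤ 1 := h4
  have hmem : k ∈ {k : ℝ | 0 < k ∧ ∫ x, (Real.exp (|φ x - ψ x| / k) - 1) ∂μ ≤ 1} :=
    ⟨hk0, le_trans hint hnum⟩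
  have hbdd : BddBelow {k : ℝ | 0 < k ∧ ∫ x, (Real.exp (|φ x - ψ x| / k) - 1) ∂μ ≤ 1} :=
    ⟨0, fun x hx => le_of_lt hx.1⟩
  exact csInf_le hbdd hmem
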